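/- For H ∈ ℝ, ρ ∈ ℝ and m ∈ (0,∞), define δ := ρ/m and J_{H,ρ,m}(t) := ((c_δ(t) + (H/m) s_δ(t))₊)^m, where s_δ, c_δ are the generalized sine/cosine functions and f₊ denotes truncation of f between its first nonpositive and first positive roots. Then on the maximal open interval around 0 where J := J_{H,ρ,m} is positive and smooth, J satisfies the ODE −(log J)'' − (1/m)((log J)')² = ρ with J(0) = 1 and J'(0) = H. -/

import Mathlib

open scoped Classical

noncomputable def sdel (δ t : ℝ) : ℝ :=
  if 0 < δ then Real.sin (Real.sqrt δ * t) / Real.sqrt δ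
  else if δ = 0 then t
  else Real.sinh (Real.sqrt (-δ) * t) / Real.sqrt (-δ)

noncomputable def cdel (δ t : ℝ) : ℝ :=
  if 0 < δ then Real.cos (Real.sqrt δ * t)
  else if δ = 0 then 1
  else Real.cosh (Real.sqrt (-δ) * t)

/-- Truncation `f₊` of `f` between its first nonpositive and first positive roots. -/
noncomputable def truncPos (f : ℝ → ℝ) (t : ℝ) : ℝ :=
  if ∃ s ∈ Set.Ioo (min t 0) (max t 0), f s = 0 then 0 else f t

/-- The model Jacobian `J_{H,ρ,m}` for `m ∈ (0,∞)`. -/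
noncomputable def Jfun (H ρ m : ℝ) (t : ℝ) : ℝ :=
  (truncPos (fun s => cdel (ρ / m) s + (H / m) * sdel (ρ / m) s) t) ^ m

open Filter Topology

noncomputable def phi (δ c : ℝ) : ℝ → ℝ := fun t => cdel δ t + c * sdel δ t
noncomputable def phid (δ c : ℝ) : ℝ → ℝ := fun t => -δ * sdel δ t + c * cdel δ t

lemma sdel_zero (δ : ℝ) : sdel δ 0 = 0 := by
  unfold sdel; split_ifs <;> simp

lemma cdel_zero (δ : ℝ) : cdel δ 0 = 1 := by
  unfold cdel; split_ifs <;> simp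

lemma hasDerivAt_sdel (δ t : ℝ) : HasDerivAt (sdel δ) (cdel δ t) t := by
  unfold sdel cdel
  split_ifs with h1 h2
  · have h0 : (0:ℝ) < Real.sqrt δ := Real.sqrt_pos.mpr h1
    have hs : HasDerivAt (fun x => Real.sin (Real.sqrt δ * x))
        (Real.cos (Real.sqrt δ * t) * (Real.sqrt δ * 1)) t :=
      (Real.hasDerivAt_sin (Real.sqrt δ * t)).comp t ((hasDerivAt_id t).const_mul (Real.sqrt δ))
    refine (hs.div_const (Real.sqrt δ)).congr_deriv ?_
    field_simp
  · simpa using hasDerivAt_id' t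
  · have hδ : δ < 0 := lt_of_le_of_ne (not_lt.mp h1) h2
    have h0 : (0:ℝ) < Real.sqrt (-δ) := Real.sqrt_pos.mpr (by linarith)
    have hs : HasDerivAt (fun x => Real.sinh (Real.sqrt (-δ) * x))
        (Real.cosh (Real.sqrt (-δ) * t) * (Real.sqrt (-δ) * 1)) t :=
      (Real.hasDerivAt_sinh (Real.sqrt (-δ) * t)).comp t ((hasDerivAt_id t).const_mul (Real.sqrt (-δ)))
    refine (hs.div_const (Real.sqrt (-δ))).congr_deriv ?_
    field_simp

lemma hasDerivAt_cdel (δ t : ℝ) : HasDerivAt (cdel δ) (-δ * sdel δ t) t := by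
  unfold sdel cdel
  split_ifs with h1 h2
  · have h0 : (0:ℝ) < Real.sqrt δ := Real.sqrt_pos.mpr h1
    have hsq : Real.sqrt δ * Real.sqrt δ = δ := Real.mul_self_sqrt h1.le
    have hs : HasDerivAt (fun x => Real.cos (Real.sqrt δ * x))
        (-Real.sin (Real.sqrt δ * t) * (Real.sqrt δ * 1)) t :=
      (Real.hasDerivAt_cos (Real.sqrt δ * t)).comp t ((hasDerivAt_id t).const_mul (Real.sqrt δ))
    convert hs using 1
    field_simp
    rw [sq, hsq]
  · subst h2
    simpa using hasDerivAt_const t (1:ℝ)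
  · have hδ : δ < 0 := lt_of_le_of_ne (not_lt.mp h1) h2
    have h0 : (0:ℝ) < Real.sqrt (-δ) := Real.sqrt_pos.mpr (by linarith)
    have hsq : Real.sqrt (-δ) * Real.sqrt (-δ) = -δ := Real.mul_self_sqrt (by linarith)
    have hs : HasDerivAt (fun x => Real.cosh (Real.sqrt (-δ) * x))
        (Real.sinh (Real.sqrt (-δ) * t) * (Real.sqrt (-δ) * 1)) t :=
      (Real.hasDerivAt_cosh (Real.sqrt (-δ) * t)).comp t ((hasDerivAt_id t).const_mul (Real.sqrt (-δ)))
    convert hs using 1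
    field_simp
    rw [sq, hsq]
    ring

lemma hasDerivAt_phi (δ c t : ℝ) : HasDerivAt (phi δ c) (phid δ c t) t :=
  (hasDerivAt_cdel δ t).add ((hasDerivAt_sdel δ t).const_mul c)

lemma hasDerivAt_phid (δ c t : ℝ) : HasDerivAt (phid δ c) (-δ * phi δ c t) t := by
  have h := ((hasDerivAt_sdel δ t).const_mul (-δ)).add ((hasDerivAt_cdel δ t).const_mul c)
  refine h.congr_deriv ?_
  unfold phi
  ring

lemma continuous_phi (δ c : ℝ) : Continuous (phi δ c) := by
  rw [continuous_iff_continuousAt]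
  exact fun t => (hasDerivAt_phi δ c t).differentiableAt.continuousAt

lemma phi_zero (δ c : ℝ) : phi δ c 0 = 1 := by simp [phi, sdel_zero, cdel_zero]
lemma phid_zero (δ c : ℝ) : phid δ c 0 = c := by simp [phid, sdel_zero, cdel_zero]

lemma trunc_eq {f : ℝ → ℝ} {s : ℝ} (h : ∀ u ∈ Set.uIcc 0 s, 0 < f u) :
    truncPos f s = f s := by
  rw [truncPos, if_neg]
  rintro ⟨u, hu, hfu⟩
  have hmem : u ∈ Set.uIcc 0 s := by
    rcases le_total 0 s with hs | hs
    · rw [min_eq_right hs, max_eq_left hs] at hu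
      exact Set.mem_uIcc.mpr (Or.inl ⟨hu.1.le, hu.2.le⟩)
    · rw [min_eq_left hs, max_eq_right hs] at hu
      exact Set.mem_uIcc.mpr (Or.inr ⟨hu.1.le, hu.2.le⟩)
  exact absurd hfu (h u hmem).ne'

lemma phi_pos (δ c m : ℝ) (hm : 0 < m) {t : ℝ}
    (h : ∀ s ∈ Set.uIcc 0 t, 0 < (truncPos (phi δ c) s) ^ m) :
    ∀ s ∈ Set.uIcc 0 t, 0 < phi δ c s := by
  intro s hs
  have hJ := h s hs
  by_cases hz : ∃ u ∈ Set.Ioo (min s 0) (max s 0), phi δ c u = 0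
  · rw [truncPos, if_pos hz, Real.zero_rpow hm.ne'] at hJ
    exact absurd hJ (lt_irrefl 0)
  · rw [truncPos, if_neg hz] at hJ
    by_contra hneg
    push_neg at hneg
    rcases hneg.lt_or_eq with hlt | heq
    · have h0 : phi δ c 0 = 1 := phi_zero δ c
      rcases lt_trichotomy s 0 with hs0 | hs0 | hs0
      · have hiv := intermediate_value_Ioo hs0.le ((continuous_phi δ c).continuousOn
          (s := Set.Icc s 0))
        have h0m : (0:ℝ) ∈ Set.Ioo (phi δ c s) (phi δ c 0) := ⟨hlt, by rw [h0]; norm_num⟩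
        obtain ⟨u, hu, hu0⟩ := hiv h0m
        exact hz ⟨u, by rw [min_eq_left hs0.le, max_eq_right hs0.le]; exact hu, hu0⟩
      · rw [hs0, h0] at hlt; norm_num at hlt
      · have hiv := intermediate_value_Ioo' hs0.le ((continuous_phi δ c).continuousOn
          (s := Set.Icc 0 s))
        have h0m : (0:ℝ) ∈ Set.Ioo (phi δ c s) (phi δ c 0) := ⟨hlt, by rw [h0]; norm_num⟩
        obtain ⟨u, hu, hu0⟩ := hiv h0m
        exact hz ⟨u, by rw [min_eq_right hs0.le, max_eq_left hs0.le]; exact hu, hu0⟩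
    · rw [heq, Real.zero_rpow hm.ne'] at hJ
      exact absurd hJ (lt_irrefl 0)

lemma uIcc_abs {s t u : ℝ} (hu : u ∈ Set.uIcc 0 s) (hut : u ∉ Set.uIcc 0 t) :
    |u - t| ≤ |s - t| := by
  rw [Set.mem_uIcc] at hu hut
  push_neg at hut
  have h1 := le_abs_self (s - t)
  have h2 := neg_abs_le (s - t)
  rcases hu with ⟨ha, hb⟩ | ⟨ha, hb⟩
  · have htu : t < u := hut.1 ha
    rw [abs_of_pos (by linarith)]
    linarith
  · have htu : u < t := by
      by_contra hcon
      exact absurd (hut.2 (not_lt.mp hcon)) (not_lt.mpr hb)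
    rw [abs_of_neg (by linarith)]
    linarith

lemma eventually_trunc (δ c : ℝ) {t : ℝ} (h : ∀ s ∈ Set.uIcc 0 t, 0 < phi δ c s) :
    ∀ᶠ s in 𝓝 t, ∀ u ∈ Set.uIcc 0 s, 0 < phi δ c u := by
  have ht : (0:ℝ) < phi δ c t := h t Set.right_mem_uIcc
  have hnb : (phi δ c) ⁻¹' Set.Ioi 0 ∈ 𝓝 t :=
    (continuous_phi δ c).continuousAt.preimage_mem_nhds (Ioi_mem_nhds ht)
  rw [Metric.mem_nhds_iff] at hnb
  obtain ⟨ε, hε, hball⟩ := hnb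
  rw [Metric.eventually_nhds_iff]
  refine ⟨ε, hε, fun s hst u hu => ?_⟩
  by_cases hut : u ∈ Set.uIcc 0 t
  · exact h u hut
  · have habs : |u - t| ≤ |s - t| := uIcc_abs hu hut
    have hmem : u ∈ Metric.ball t ε := by
      rw [Metric.mem_ball, Real.dist_eq]
      rw [Real.dist_eq] at hst
      exact lt_of_le_of_lt habs hst
    exact hball hmem

theorem stmt0 (H ρ m : ℝ) (hm : 0 < m) :
    Jfun H ρ m 0 = 1 ∧ deriv (Jfun H ρ m) 0 = H ∧
    ∀ t : ℝ, (∀ s ∈ Set.uIcc 0 t, 0 < Jfun H ρ m s) →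
      -(deriv (deriv (fun s => Real.log (Jfun H ρ m s))) t)
        - (1 / m) * (deriv (fun s => Real.log (Jfun H ρ m s)) t) ^ 2 = ρ := by
  have hJ : Jfun H ρ m = fun t => (truncPos (phi (ρ/m) (H/m)) t) ^ m := rfl
  have hpos0 : ∀ u ∈ Set.uIcc 0 (0:ℝ), 0 < phi (ρ/m) (H/m) u := by
    intro u hu
    simp only [Set.uIcc_self, Set.mem_singleton_iff] at hu
    rw [hu, phi_zero]; norm_num
  have h1 : Jfun H ρ m 0 = 1 := by
    rw [hJ]
    simp only
    rw [trunc_eq hpos0, phi_zero, Real.one_rpow]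
  have hev0 : ∀ᶠ s in 𝓝 (0:ℝ), ∀ u ∈ Set.uIcc 0 s, 0 < phi (ρ/m) (H/m) u :=
    eventually_trunc (ρ/m) (H/m) hpos0
  have hevJ : Jfun H ρ m =ᶠ[𝓝 (0:ℝ)] fun s => phi (ρ/m) (H/m) s ^ m :=
    hev0.mono (fun s hs => by rw [hJ]; simp only; rw [trunc_eq hs])
  have hd : HasDerivAt (fun s => phi (ρ/m) (H/m) s ^ m) H 0 := by
    have h := (hasDerivAt_phi (ρ/m) (H/m) 0).rpow_const (p := m)
      (Or.inl (by rw [phi_zero]; norm_num))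
    convert h using 1
    rw [phi_zero, phid_zero, Real.one_rpow]
    simp only [neg_mul, mul_zero, sdel_zero, neg_zero, cdel_zero, mul_one, zero_add]
    field_simp
  have h2 : deriv (Jfun H ρ m) 0 = H := by rw [hevJ.deriv_eq]; exact hd.deriv
  refine ⟨h1, h2, fun t ht => ?_⟩
  have hpos : ∀ s ∈ Set.uIcc 0 t, 0 < phi (ρ/m) (H/m) s := phi_pos (ρ/m) (H/m) m hm ht
  have hev : ∀ᶠ s in 𝓝 t, ∀ u ∈ Set.uIcc 0 s, 0 < phi (ρ/m) (H/m) u :=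
    eventually_trunc (ρ/m) (H/m) hpos
  have hev1 : (fun s => Real.log (Jfun H ρ m s)) =ᶠ[𝓝 t]
      fun s => m * Real.log (phi (ρ/m) (H/m) s) := by
    refine hev.mono (fun s hs => ?_)
    show Real.log (Jfun H ρ m s) = _
    rw [hJ]
    simp only
    rw [trunc_eq hs, Real.log_rpow (hs s Set.right_mem_uIcc)]
  have hd1 : ∀ s, 0 < phi (ρ/m) (H/m) s →
      HasDerivAt (fun u => m * Real.log (phi (ρ/m) (H/m) u))
        (m * (phid (ρ/m) (H/m) s / phi (ρ/m) (H/m) s)) s :=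
    fun s hs => ((hasDerivAt_phi (ρ/m) (H/m) s).log hs.ne').const_mul m
  have hev2 : deriv (fun s => Real.log (Jfun H ρ m s)) =ᶠ[𝓝 t]
      fun s => m * (phid (ρ/m) (H/m) s / phi (ρ/m) (H/m) s) :=
    hev1.deriv.trans (hev.mono (fun s hs => (hd1 s (hs s Set.right_mem_uIcc)).deriv))
  have hφt : 0 < phi (ρ/m) (H/m) t := hpos t Set.right_mem_uIcc
  have hd2 : HasDerivAt (fun s => m * (phid (ρ/m) (H/m) s / phi (ρ/m) (H/m) s))
      (m * ((-(ρ/m) * phi (ρ/m) (H/m) t * phi (ρ/m) (H/m) t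
        - phid (ρ/m) (H/m) t * phid (ρ/m) (H/m) t) / (phi (ρ/m) (H/m) t)^2)) t :=
    ((hasDerivAt_phid (ρ/m) (H/m) t).div (hasDerivAt_phi (ρ/m) (H/m) t) hφt.ne').const_mul m
  have hDL : deriv (fun s => Real.log (Jfun H ρ m s)) t
      = m * (phid (ρ/m) (H/m) t / phi (ρ/m) (H/m) t) := hev2.self_of_nhds
  have hDDL : deriv (deriv (fun s => Real.log (Jfun H ρ m s))) t
      = m * ((-(ρ/m) * phi (ρ/m) (H/m) t * phi (ρ/m) (H/m) t
        - phid (ρ/m) (H/m) t * phid (ρ/m) (H/m) t) / (phi (ρ/m) (H/m) t)^2) := by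
    rw [hev2.deriv_eq]; exact hd2.deriv
  rw [hDDL, hDL]
  field_simp
  ring
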